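/- arXiv:1703.03066 — 9 statements merged into one kernel-verified Lean document; each statement's English description precedes it below -/
import Mathlib

section
/- Let X be a dense subspace of a compact Hausdorff space cX, and let f : cX → dX be a continuous surjection onto a compact Hausdorff space dX that restricts to a homeomorphism of X onto its image, with f(X) dense in dX. If X is an F_σδ subset of dX, then X is an F_σδ subset of cX. -/
open Set Topology Filter

/-- A set is `F_σ` if it is a countable union of closed sets. -/
def IsFSigma {X : Type*} [TopologicalSpace X] (A : Set X) : Prop :=
  ∃ F : ℕ → Set X, (∀ n, IsClosed (F n)) ∧ A = ⋃ n, F n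

/-- A set is `F_σδ` if it is a countable intersection of countable unions of closed sets. -/
def IsFSigmaDelta {X : Type*} [TopologicalSpace X] (A : Set X) : Prop :=
  ∃ F : ℕ → ℕ → Set X, (∀ n m, IsClosed (F n m)) ∧ A = ⋂ n, ⋃ m, F n m

/-- If `X` is `F_σδ` in a compactification `dX`, it is `F_σδ` in any larger
compactification `cX`. -/
theorem fSigmaDelta_of_smaller_compactification {cX dX : Type*}
    [TopologicalSpace cX] [CompactSpace cX] [T2Space cX]
    [TopologicalSpace dX] [CompactSpace dX] [T2Space dX]
    (X : Set cX) (hXdense : Dense X)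
    (f : cX → dX) (hf : Continuous f) (hsurj : Function.Surjective f)
    (hemb : IsEmbedding (fun x : X => f x)) (hdense : Dense (f '' X))
    (hF : IsFSigmaDelta (f '' X)) :
    IsFSigmaDelta X := by
  have key : X = f ⁻¹' (f '' X) := by
    apply Subset.antisymm (subset_preimage_image f X)
    rintro p ⟨x, hx, hfx⟩
    -- hfx : f x = f p
    have hFne : (𝓝[X] p).NeBot := mem_closure_iff_nhdsWithin_neBot.mp (hXdense p)
    set F : Filter cX := 𝓝[X] p with hFdef
    have hmemX : X ∈ F := self_mem_nhdsWithin
    have hF' : (Filter.comap (Subtype.val : X → cX) F).NeBot :=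
      hFne.comap_of_range_mem (by rw [Subtype.range_coe]; exact hmemX)
    have h1 : F ≤ Filter.comap f (𝓝 (f p)) := by
      refine le_trans (le_trans nhdsWithin_le_nhds ?_) le_rfl
      exact (hf.tendsto p).le_comap
    have h2 : Filter.comap (Subtype.val : X → cX) F ≤ 𝓝 (⟨x, hx⟩ : X) := by
      rw [hemb.toIsInducing.nhds_eq_comap]
      have : Filter.comap (fun x : X => f x) (𝓝 (f x)) =
          Filter.comap (Subtype.val : X → cX) (Filter.comap f (𝓝 (f x))) := by
        rw [Filter.comap_comap]; rfl
      simp only [this]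
      rw [hfx]
      exact Filter.comap_mono h1
    have h3 : F ≤ 𝓝 x := by
      have := Filter.map_mono (m := (Subtype.val : X → cX)) h2
      have hmap : Filter.map (Subtype.val : X → cX)
          (Filter.comap (Subtype.val : X → cX) F) = F := by
        rw [Filter.map_comap, Subtype.range_coe, inf_eq_left]
        exact le_principal_iff.mpr hmemX
      rw [hmap] at this
      exact this.trans (continuous_subtype_val.tendsto _)
    have h4 : F ≤ 𝓝 p := nhdsWithin_le_nhds
    have : x = p := eq_of_nhds_neBot (neBot_of_le (le_inf h3 h4))
    rwa [← this]
  obtain ⟨G, hGc, hGx⟩ := hF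
  refine ⟨fun n m => f ⁻¹' G n m, fun n m => (hGc n m).preimage hf, ?_⟩
  rw [key, hGx]
  simp [preimage_iInter, preimage_iUnion]
end

section
/- Let X be dense in a compact Hausdorff space cX, let dX be a compact Hausdorff space, and let φ : cX → dX be a continuous surjection restricting to a homeomorphism of X onto a dense subset of dX. Suppose X is an F_σδ subset of cX. Then X (identified with its image φ(X)) is an F_σδ subset of dX if and only if there exists a sequence (H_n) of F_σ subsets of cX such that for every y ∈ dX \ φ(X) with φ⁻¹(y) not a singleton, there exists n with X ⊆ H_n ⊆ cX \ φ⁻¹(y). -/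
open Set Topology Filter

/-- Characterization: assuming `X` is `F_σδ` in a compactification `cX` and `dX ⪯ cX` is
witnessed by `φ`, `X` is `F_σδ` in `dX` iff there is a sequence of `F_σ` subsets of `cX`
separating `X` from every non-singleton fiber of `φ`. -/
theorem fSigmaDelta_in_smaller_iff {cX dX : Type*}
    [TopologicalSpace cX] [CompactSpace cX] [T2Space cX]
    [TopologicalSpace dX] [CompactSpace dX] [T2Space dX]
    (X : Set cX) (hXdense : Dense X) (hXfsd : IsFSigmaDelta X)
    (φ : cX → dX) (hφ : Continuous φ) (hsurj : Function.Surjective φ)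
    (hemb : IsEmbedding (fun x : X => φ x)) (hdense : Dense (φ '' X)) :
    IsFSigmaDelta (φ '' X) ↔
      ∃ H : ℕ → Set cX, (∀ n, IsFSigma (H n)) ∧
        ∀ y : dX, y ∉ φ '' X → ¬ (φ ⁻¹' {y}).Subsingleton →
          ∃ n, X ⊆ H n ∧ H n ⊆ (φ ⁻¹' {y})ᶜ := by
  obtain ⟨F, hFcl, hFX⟩ := hXfsd
  constructor
  · rintro ⟨G, hGcl, hG⟩
    refine ⟨fun n => φ ⁻¹' (⋃ m, G n m),
      fun n => ⟨fun m => φ ⁻¹' (G n m), fun m => (hGcl n m).preimage hφ,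
        by simp [preimage_iUnion]⟩, ?_⟩
    intro y hy _
    have hy' : y ∉ ⋂ n, ⋃ m, G n m := by rw [← hG]; exact hy
    rw [mem_iInter] at hy'
    push_neg at hy'
    obtain ⟨n, hn⟩ := hy'
    refine ⟨n, fun x hx => ?_, fun x hx hxy => ?_⟩
    · have : φ x ∈ φ '' X := mem_image_of_mem φ hx
      rw [hG] at this
      exact mem_iInter.mp this n
    · exact hn (by simpa [show φ x = y from hxy] using hx)
  · rintro ⟨H, hHfs, hH⟩
    classical
    set H' : ℕ → Set cX := fun n => if X ⊆ H n then H n else univ with hH'def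
    have hH'fs : ∀ n, IsFSigma (H' n) := by
      intro n
      by_cases h : X ⊆ H n
      · simpa [H', h] using hHfs n
      · exact ⟨fun _ => univ, fun _ => isClosed_univ, by simp [H', h, iUnion_const]⟩
    have hXH' : ∀ n, X ⊆ H' n := by
      intro n
      by_cases h : X ⊆ H n <;> simp [H', h]
    have hsep : ∀ y : dX, y ∉ φ '' X → ¬ (φ ⁻¹' {y}).Subsingleton →
        ∃ n, H' n ⊆ (φ ⁻¹' {y})ᶜ := by
      intro y hy hns
      obtain ⟨n, hXn, hnc⟩ := hH y hy hns
      exact ⟨n, by simpa [H', hXn] using hnc⟩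
    choose P hPcl hPU using hH'fs
    have himcl : ∀ (A : Set cX), IsClosed A → IsClosed (φ '' A) := fun A hA =>
      (hA.isCompact.image hφ).isClosed
    have key : φ '' X = (⋂ n, ⋃ m, φ '' (F n m)) ∩ (⋂ n, ⋃ m, φ '' (P n m)) := by
      apply Subset.antisymm
      · rintro y ⟨x, hx, rfl⟩
        constructor
        · refine mem_iInter.mpr fun n => ?_
          have : x ∈ ⋃ m, F n m := by
            have := hFX ▸ hx
            exact mem_iInter.mp this n
          obtain ⟨m, hm⟩ := mem_iUnion.mp this
          exact mem_iUnion.mpr ⟨m, mem_image_of_mem φ hm⟩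
        · refine mem_iInter.mpr fun n => ?_
          have : x ∈ ⋃ m, P n m := (hPU n) ▸ hXH' n hx
          obtain ⟨m, hm⟩ := mem_iUnion.mp this
          exact mem_iUnion.mpr ⟨m, mem_image_of_mem φ hm⟩
      · rintro y ⟨h1, h2⟩
        by_contra hy
        by_cases hns : (φ ⁻¹' {y}).Subsingleton
        · -- fiber is a subsingleton
          have h10 := mem_iInter.mp h1 0
          simp only [mem_iUnion, mem_image] at h10
          obtain ⟨m0, x0, hx0, hx0y⟩ := h10
          have hx0X : x0 ∈ X := by
            rw [hFX]
            refine mem_iInter.mpr fun n => ?_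
            have h1n := mem_iInter.mp h1 n
            simp only [mem_iUnion, mem_image] at h1n
            obtain ⟨m, x1, hx1, hx1y⟩ := h1n
            have : x1 = x0 := hns (by simp [hx1y]) (by simp [hx0y])
            exact mem_iUnion.mpr ⟨m, this ▸ hx1⟩
          exact hy ⟨x0, hx0X, hx0y⟩
        · obtain ⟨n, hn⟩ := hsep y hy hns
          have h2n := mem_iInter.mp h2 n
          simp only [mem_iUnion, mem_image] at h2n
          obtain ⟨m, x1, hx1, hx1y⟩ := h2n
          have hx1H : x1 ∈ H' n := (hPU n) ▸ mem_iUnion.mpr ⟨m, hx1⟩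
          exact hn hx1H (by simp [hx1y])
    refine ⟨fun n m => if n % 2 = 0 then φ '' (F (n / 2) m) else φ '' (P (n / 2) m),
      fun n m => ?_, ?_⟩
    · by_cases h : n % 2 = 0 <;> simp [h, himcl _ (hFcl _ m), himcl _ (hPcl _ m)]
    · rw [key]
      ext y
      simp only [mem_inter_iff, mem_iInter]
      constructor
      · rintro ⟨hA, hB⟩ n
        rcases Nat.even_or_odd n with ⟨k, hk⟩ | ⟨k, hk⟩
        · have h1 : n % 2 = 0 := by omega
          have h2 : n / 2 = k := by omega
          simpa [h1, h2] using hA k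
        · have h1 : ¬ n % 2 = 0 := by omega
          have h2 : n / 2 = k := by omega
          simpa [h1, h2] using hB k
      · intro h
        constructor
        · intro k
          have := h (2 * k)
          have h1 : 2 * k % 2 = 0 := by omega
          have h2 : 2 * k / 2 = k := by omega
          simpa [h1, h2] using this
        · intro k
          have := h (2 * k + 1)
          have h1 : ¬ (2 * k + 1) % 2 = 0 := by omega
          have h2 : (2 * k + 1) / 2 = k := by omega
          simpa [h1, h2] using this
end

section
/- Let X be dense in a compact Hausdorff space cX with X an F_σδ subset of cX, let φ : cX → dX be a continuous surjection onto a compact Hausdorff space dX restricting to a homeomorphism of X onto a dense subset of dX, and suppose the set of points y ∈ dX whose fiber φ⁻¹(y) is not a singleton is countable. Then φ(X) is an F_σδ subset of dX. -/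
open Set Topology Filter

/-- Key covering lemma: if `X = ⋂ₙ ⋃ₘ F n m` is an `F_σδ` set in a compact Hausdorff space
and `K` is a closed set disjoint from `X`, then `X` can be covered by countably many closed
sets each disjoint from `K`. -/
lemma key_cover {cX : Type*} [TopologicalSpace cX] [CompactSpace cX] [T2Space cX]
    (F : ℕ → ℕ → Set cX) (hFcl : ∀ n m, IsClosed (F n m))
    (K : Set cX) (hKcl : IsClosed K) (hdisj : ∀ x ∈ ⋂ n, ⋃ m, F n m, x ∉ K) :
    ∃ D : ℕ → Set cX, (∀ k, IsClosed (D k) ∧ ∀ x ∈ D k, x ∉ K) ∧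
      (⋂ n, ⋃ m, F n m) ⊆ ⋃ k, D k := by
  classical
  set X : Set cX := ⋂ n, ⋃ m, F n m with hXdef
  set P : Set cX → Prop := fun S =>
    ∃ D : ℕ → Set cX, (∀ k, IsClosed (D k) ∧ ∀ x ∈ D k, x ∉ K) ∧ S ⊆ ⋃ k, D k with hPdef
  by_contra hP
  have hPX : ¬ P X := hP
  have Pmono : ∀ S T : Set cX, T ⊆ S → P S → P T := by
    rintro S T hTS ⟨D, hD, hS⟩
    exact ⟨D, hD, hTS.trans hS⟩
  have Punion : ∀ T : ℕ → Set cX, (∀ m, P (T m)) → P (⋃ m, T m) := by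
    intro T hT
    choose D hD hcov using hT
    refine ⟨fun k => D k.unpair.1 k.unpair.2, fun k => hD _ _, ?_⟩
    intro x hx
    obtain ⟨m, hm⟩ := mem_iUnion.1 hx
    obtain ⟨j, hj⟩ := mem_iUnion.1 (hcov m hm)
    exact mem_iUnion.2 ⟨Nat.pair m j, by simpa [Nat.unpair_pair] using hj⟩
  have step : ∀ (n : ℕ) (S : Set cX), S ⊆ X → ¬ P S → ∃ m, ¬ P (S ∩ F n m) := by
    intro n S hSX hPS
    by_contra h
    push_neg at h
    apply hPS
    refine Pmono _ _ ?_ (Punion (fun m => S ∩ F n m) h)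
    intro x hx
    have : x ∈ ⋃ m, F n m := mem_iInter.1 (hSX hx) n
    obtain ⟨m, hm⟩ := mem_iUnion.1 this
    exact mem_iUnion.2 ⟨m, hx, hm⟩
  -- recursive construction
  let g : ℕ → Set cX → Set cX := fun n S =>
    if h : S ⊆ X ∧ ¬ P S then S ∩ F n (Classical.choose (step n S h.1 h.2)) else ∅
  let Sq : ℕ → Set cX := fun k => Nat.rec X g k
  have hS0 : Sq 0 = X := rfl
  have hSsucc : ∀ k, Sq (k + 1) = g k (Sq k) := fun k => rfl
  have main : ∀ k, Sq k ⊆ X ∧ ¬ P (Sq k) := by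
    intro k
    induction k with
    | zero => exact ⟨subset_rfl, hPX⟩
    | succ k ih =>
      rw [hSsucc k]
      simp only [g, dif_pos ih]
      exact ⟨inter_subset_left.trans ih.1,
        Classical.choose_spec (step k (Sq k) ih.1 ih.2)⟩
  have hstep' : ∀ k, ∃ m, Sq (k + 1) = Sq k ∩ F k m := by
    intro k
    refine ⟨Classical.choose (step k (Sq k) (main k).1 (main k).2), ?_⟩
    rw [hSsucc k]
    simp only [g, dif_pos (main k)]
  choose σ hσ using hstep'
  have hmono : ∀ k, Sq (k + 1) ⊆ Sq k := fun k => by rw [hσ k]; exact inter_subset_left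
  have hanti : ∀ {i j : ℕ}, i ≤ j → Sq j ⊆ Sq i := by
    intro i j h
    induction h with
    | refl => exact subset_rfl
    | step _ ih => exact (hmono _).trans ih
  have hsubF : ∀ i, Sq (i + 1) ⊆ F i (σ i) := fun i => by rw [hσ i]; exact inter_subset_right
  set C : Set cX := ⋂ k, F k (σ k) with hCdef
  have hCX : C ⊆ X := by
    intro x hx
    exact mem_iInter.2 fun n => mem_iUnion.2 ⟨σ n, mem_iInter.1 hx n⟩
  have hCcl : IsClosed C := isClosed_iInter fun k => hFcl k (σ k)
  have hCK : Disjoint C K := by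
    rw [Set.disjoint_left]
    exact fun x hx => hdisj x (hCX hx)
  obtain ⟨U, V, hUo, hVo, hCU, hKV, hUV⟩ := normal_separation hCcl hKcl hCK
  have hclU : ∀ x ∈ closure U, x ∉ K := by
    intro x hx hxK
    have hUVc : U ⊆ Vᶜ := fun u hu hv => (Set.disjoint_left.1 hUV hu) hv
    have : closure U ⊆ Vᶜ := closure_minimal hUVc hVo.isClosed_compl
    exact this hx (hKV hxK)
  have final : ∃ k, Sq (k + 1) ⊆ U := by
    by_contra h
    push_neg at h
    have h' : ∀ k, ∃ x, x ∈ Sq (k + 1) ∧ x ∉ U := by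
      intro k
      obtain ⟨x, hx1, hx2⟩ := Set.not_subset.1 (h k)
      exact ⟨x, hx1, hx2⟩
    choose x hx hxU using h'
    obtain ⟨x₀, hx₀⟩ := exists_clusterPt_of_compactSpace (map x atTop)
    have h1 : ∀ i, x₀ ∈ F i (σ i) := by
      intro i
      have hmem : x '' Set.Ici i ∈ map x atTop := image_mem_map (Ici_mem_atTop i)
      have := clusterPt_iff_forall_mem_closure.1 hx₀ _ hmem
      refine closure_minimal ?_ (hFcl i (σ i)) this
      rintro _ ⟨k, hk, rfl⟩
      exact hsubF i (hanti (Nat.succ_le_succ hk) (hx k))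
    have h2 : x₀ ∉ U := by
      have hmem : x '' Set.Ici 0 ∈ map x atTop := image_mem_map (Ici_mem_atTop 0)
      have := clusterPt_iff_forall_mem_closure.1 hx₀ _ hmem
      have hsub : x '' Set.Ici 0 ⊆ Uᶜ := by
        rintro _ ⟨k, _, rfl⟩
        exact hxU k
      exact closure_minimal hsub hUo.isClosed_compl this
    exact h2 (hCU (mem_iInter.2 h1))
  obtain ⟨k, hk⟩ := final
  refine (main (k + 1)).2 ⟨fun _ => closure U, fun _ => ⟨isClosed_closure, hclU⟩, ?_⟩
  exact fun x hx => mem_iUnion.2 ⟨0, subset_closure (hk hx)⟩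

/-- Fibers over points of `φ '' X` are singletons. -/
lemma fiber_eq_of_dense_embedding {cX dX : Type*} [TopologicalSpace cX] [T2Space cX]
    [TopologicalSpace dX] (X : Set cX) (hXdense : Dense X)
    (φ : cX → dX) (hφ : Continuous φ) (hemb : IsEmbedding (fun x : X => φ x))
    {x : cX} (hx : x ∈ X) {x' : cX} (h : φ x' = φ x) : x' = x := by
  have hne : NeBot (comap ((↑) : X → cX) (𝓝 x')) :=
    mem_closure_iff_comap_neBot.1 (hXdense x')
  set Fl := comap ((↑) : X → cX) (𝓝 x') with hFl
  have h1 : Tendsto ((↑) : X → cX) Fl (𝓝 x') := tendsto_comap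
  have h2 : Tendsto (fun x : X => φ x) Fl (𝓝 (φ x)) := by
    have := (hφ.tendsto x').comp h1
    rwa [h] at this
  have h3 : Tendsto (id : X → X) Fl (𝓝 (⟨x, hx⟩ : X)) :=
    hemb.toIsInducing.tendsto_nhds_iff.2 h2
  have h4 : Tendsto ((↑) : X → cX) Fl (𝓝 x) :=
    (continuous_subtype_val.tendsto (⟨x, hx⟩ : X)).comp h3
  exact tendsto_nhds_unique h1 h4

/-- If `X` is `F_σδ` in a compactification `cX`, `dX ⪯ cX` is witnessed by `φ`, and only
countably many fibers of `φ` are non-singletons, then `X` is `F_σδ` in `dX`. -/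
theorem fSigmaDelta_of_countably_many_nontrivial_fibers {cX dX : Type*}
    [TopologicalSpace cX] [CompactSpace cX] [T2Space cX]
    [TopologicalSpace dX] [CompactSpace dX] [T2Space dX]
    (X : Set cX) (hXdense : Dense X) (hXfsd : IsFSigmaDelta X)
    (φ : cX → dX) (hφ : Continuous φ) (hsurj : Function.Surjective φ)
    (hemb : IsEmbedding (fun x : X => φ x)) (hdense : Dense (φ '' X))
    (hcnt : {y : dX | ¬ (φ ⁻¹' {y}).Subsingleton}.Countable) :
    IsFSigmaDelta (φ '' X) := by
  classical
  obtain ⟨F, hFcl, hXeq⟩ := hXfsd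
  have himgcl : ∀ S : Set cX, IsClosed S → IsClosed (φ '' S) := fun S hS =>
    (hS.isCompact.image hφ).isClosed
  set N := {y : dX | ¬ (φ ⁻¹' {y}).Subsingleton} with hNdef
  have fib : ∀ {x : cX}, x ∈ X → ∀ {x' : cX}, φ x' = φ x → x' = x :=
    fun {x} hx {x'} h => fiber_eq_of_dense_embedding X hXdense φ hφ hemb hx h
  -- membership in A implies membership in φ '' X or N
  have hA : φ '' X ⊆ ⋂ n, ⋃ m, φ '' F n m := by
    rintro _ ⟨x, hx, rfl⟩
    refine mem_iInter.2 fun n => ?_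
    obtain ⟨m, hm⟩ := mem_iUnion.1 (mem_iInter.1 (hXeq ▸ hx) n)
    exact mem_iUnion.2 ⟨m, x, hm, rfl⟩
  have hA2 : (⋂ n, ⋃ m, φ '' F n m) ⊆ φ '' X ∪ N := by
    intro y hy
    by_cases hyN : y ∈ N
    · exact Or.inr hyN
    · have hsub : (φ ⁻¹' {y}).Subsingleton := not_not.1 hyN
      obtain ⟨x₀, hx₀⟩ := hsurj y
      have hx₀f : x₀ ∈ φ ⁻¹' {y} := by simp [hx₀]
      left
      refine ⟨x₀, ?_, hx₀⟩
      rw [hXeq]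
      refine mem_iInter.2 fun n => ?_
      obtain ⟨m, x, hxF, hxy⟩ := by
        simpa using mem_iInter.1 hy n
      have : x = x₀ := hsub (by simp [hxy]) hx₀f
      exact mem_iUnion.2 ⟨m, this ▸ hxF⟩
  -- for each y in N, a countable closed cover of φ '' X avoiding y
  have hEy : ∀ y : dX, ∃ E : ℕ → Set dX, (∀ k, IsClosed (E k)) ∧
      (y ∈ N → (∀ k, y ∉ E k) ∧ φ '' X ⊆ ⋃ k, E k) := by
    intro y
    by_cases hy : y ∈ N
    · have hK : IsClosed (φ ⁻¹' {y}) := isClosed_singleton.preimage hφ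
      have hdisjXK : ∀ x ∈ ⋂ n, ⋃ m, F n m, x ∉ φ ⁻¹' {y} := by
        intro x hx hxf
        have hxX : x ∈ X := hXeq ▸ hx
        have hfx : φ x = y := hxf
        apply hy
        intro a ha b hb
        have ha' : φ a = φ x := by rw [hfx]; exact ha
        have hb' : φ b = φ x := by rw [hfx]; exact hb
        rw [fib hxX ha', fib hxX hb']
      obtain ⟨D, hD, hcov⟩ := key_cover F hFcl _ hK hdisjXK
      refine ⟨fun k => φ '' D k, fun k => himgcl _ (hD k).1, fun _ => ⟨?_, ?_⟩⟩
      · rintro k ⟨d, hd, hdy⟩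
        exact (hD k).2 d hd (by simp [hdy])
      · rintro _ ⟨x, hx, rfl⟩
        obtain ⟨k, hk⟩ := mem_iUnion.1 (hcov (hXeq ▸ hx))
        exact mem_iUnion.2 ⟨k, x, hk, rfl⟩
    · exact ⟨fun _ => ∅, fun _ => isClosed_empty, fun h => absurd h hy⟩
  choose E hEcl hEprop using hEy
  by_cases hNe : N.Nonempty
  · obtain ⟨f, hf⟩ := hcnt.exists_eq_range hNe
    have hfN : ∀ j, f j ∈ N := fun j => hf ▸ mem_range_self j
    refine ⟨fun n m => if n % 2 = 0 then φ '' F (n / 2) m else E (f (n / 2)) m,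
      ?_, ?_⟩
    · intro n m
      by_cases hn : n % 2 = 0
      · simpa only [hn, if_true] using himgcl _ (hFcl _ _)
      · simpa only [hn, if_false] using hEcl _ _
    · apply Subset.antisymm
      · intro y hy
        refine mem_iInter.2 fun n => ?_
        by_cases hn : n % 2 = 0
        · simp only [hn, if_true]
          exact mem_iInter.1 (hA hy) (n / 2)
        · simp only [hn, if_false]
          exact (hEprop (f (n / 2)) (hfN _)).2 hy
      · intro z hz
        have hzA : z ∈ ⋂ n, ⋃ m, φ '' F n m := by
          refine mem_iInter.2 fun n => ?_
          have := mem_iInter.1 hz (2 * n)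
          have h1 : (2 * n) % 2 = 0 := by omega
          have h2 : (2 * n) / 2 = n := by omega
          simpa [h1, h2] using this
        rcases hA2 hzA with hzX | hzN
        · exact hzX
        · exfalso
          obtain ⟨j, hj⟩ : ∃ j, f j = z := by
            have : z ∈ range f := hf ▸ hzN
            exact this
          have := mem_iInter.1 hz (2 * j + 1)
          have h1 : ¬ ((2 * j + 1) % 2 = 0) := by omega
          have h2 : (2 * j + 1) / 2 = j := by omega
          simp only [h1, if_false, h2] at this
          obtain ⟨m, hm⟩ := mem_iUnion.1 this
          exact (hEprop (f j) (hfN j)).1 m (hj ▸ hm)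
  · -- N is empty, so φ '' X = ⋂ n ⋃ m φ '' F n m
    refine ⟨fun n m => φ '' F n m, fun n m => himgcl _ (hFcl n m), ?_⟩
    apply Subset.antisymm hA
    intro z hz
    rcases hA2 hz with hzX | hzN
    · exact hzX
    · exact absurd ⟨z, hzN⟩ hNe
end

section
/- Let X be a dense subspace of a compact Hausdorff space cX and let (𝓕_n) be a complete sequence of covers of X. If F_n ∈ 𝓕_n satisfy F_1 ⊇ F_2 ⊇ ⋯ (and all F_n are nonempty), then the intersection of the closures of the F_n taken in cX is contained in X. -/
open Set Topology Filter

/-- A sequence of covers of `X` is complete if every (proper) filter on `X` containing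
a member of each cover has an accumulation (cluster) point in `X`. -/
def CompleteCoverSeq {X : Type*} [TopologicalSpace X] (𝓕 : ℕ → Set (Set X)) : Prop :=
  (∀ n, ⋃₀ 𝓕 n = Set.univ) ∧
    ∀ F : Filter X, F.NeBot → (∀ n, ∃ A ∈ 𝓕 n, A ∈ F) → ∃ x : X, ClusterPt x F

/-- If `(𝓕 n)` is a complete sequence of covers of a dense subspace `X` of a compact
Hausdorff space `cX` and `F n ∈ 𝓕 n` is a decreasing sequence of nonempty sets, then the
intersection of the closures (in `cX`) of the `F n` is contained in `X`. -/
theorem iInter_closure_subset_of_completeCoverSeq {cX : Type*} [TopologicalSpace cX]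
    [CompactSpace cX] [T2Space cX] (X : Set cX) (hXdense : Dense X)
    (𝓕 : ℕ → Set (Set X)) (h : CompleteCoverSeq 𝓕)
    (F : ℕ → Set X) (hF : ∀ n, F n ∈ 𝓕 n) (hmono : ∀ n, F (n + 1) ⊆ F n)
    (hne : ∀ n, (F n).Nonempty) :
    ⋂ n, closure ((↑) '' F n : Set cX) ⊆ X := by
  intro y hy
  simp only [mem_iInter] at hy
  have hanti : Antitone F := antitone_nat_of_succ_le hmono
  have hdir : Directed (· ≥ ·) F := hanti.directed_ge
  set G : Filter X := (⨅ n, 𝓟 (F n)) ⊓ comap Subtype.val (𝓝 y) with hG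
  have hb : G.HasBasis (fun p : ℕ × Set cX => p.2 ∈ 𝓝 y)
      (fun p => F p.1 ∩ Subtype.val ⁻¹' p.2) := by
    have h1 := Filter.hasBasis_iInf_principal hdir
    have h2 := (𝓝 y).basis_sets.comap (Subtype.val : X → cX)
    have := h1.inf h2
    refine this.to_hasBasis ?_ ?_
    · rintro ⟨n, U⟩ ⟨-, hU⟩
      exact ⟨⟨n, U⟩, hU, subset_rfl⟩
    · rintro ⟨n, U⟩ hU
      exact ⟨⟨n, U⟩, ⟨trivial, hU⟩, subset_rfl⟩
  have hne' : G.NeBot := by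
    refine hb.neBot_iff.2 ?_
    rintro ⟨n, U⟩ hU
    rcases mem_closure_iff_nhds.1 (hy n) U hU with ⟨z, hzU, x, hxF, hxz⟩
    exact ⟨x, hxF, by simpa [hxz] using hzU⟩
  obtain ⟨x, hx⟩ := h.2 G hne' fun n =>
    ⟨F n, hF n, mem_inf_of_left (mem_iInf_of_mem n (mem_principal_self _))⟩
  have h1 : ClusterPt (↑x : cX) (map Subtype.val G) :=
    hx.map continuous_subtype_val.continuousAt tendsto_map
  have h2 : map Subtype.val G ≤ 𝓝 y :=
    le_trans (map_mono inf_le_right) map_comap_le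
  have h3 : ClusterPt (↑x : cX) (𝓝 y) := h1.mono h2
  have : (↑x : cX) = y := eq_of_nhds_neBot h3
  rw [← this]
  exact x.2
end

section
/- Every hereditarily Lindelöf regular space that admits a complete sequence of countable closed covers admits a complete sequence of countable disjoint F_σ covers. -/
open Set Topology Filter

/-- In a regular hereditarily Lindelöf space, every open set is `F_σ`. -/
lemma IsOpen.isFSigma' {X : Type*} [TopologicalSpace X] [RegularSpace X]
    [HereditarilyLindelofSpace X] {U : Set X} (hU : IsOpen U) : IsFSigma U := by
  rcases eq_empty_or_nonempty U with rfl | hne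
  · exact ⟨fun _ => ∅, fun _ => isClosed_empty, by simp⟩
  -- for each x ∈ U, pick a closed neighborhood inside U
  have hx : ∀ x : U, ∃ C : Set X, C ∈ 𝓝 (x : X) ∧ IsClosed C ∧ C ⊆ U := by
    intro x
    exact exists_mem_nhds_isClosed_subset (hU.mem_nhds x.2)
  choose C hCmem hCcl hCsub using hx
  have hLin : IsLindelof U := HereditarilyLindelof_LindelofSets U
  have hcov : U ⊆ ⋃ x : U, interior (C x) := by
    intro y hy
    exact mem_iUnion.2 ⟨⟨y, hy⟩, mem_interior_iff_mem_nhds.2 (hCmem ⟨y, hy⟩)⟩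
  obtain ⟨r, hrcnt, hrsub⟩ := hLin.elim_countable_subcover
    (fun x : U => interior (C x)) (fun _ => isOpen_interior) hcov
  have hUeq : U = ⋃ x ∈ r, C x := by
    apply Subset.antisymm
    · exact hrsub.trans (iUnion₂_mono fun x _ => interior_subset)
    · exact iUnion₂_subset fun x _ => hCsub x
  rcases r.eq_empty_or_nonempty with rfl | hrne
  · simp only [mem_empty_iff_false, iUnion_of_empty, iUnion_empty] at hUeq
    exact ⟨fun _ => ∅, fun _ => isClosed_empty, by simp [hUeq]⟩
  obtain ⟨g, hg⟩ := hrcnt.exists_eq_range hrne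
  refine ⟨fun n => C (g n), fun n => hCcl _, ?_⟩
  rw [hUeq, hg]
  apply Subset.antisymm
  · intro y hy
    rcases mem_iUnion₂.1 hy with ⟨x, hxr, hxy⟩
    rcases hxr with ⟨n, rfl⟩
    exact mem_iUnion.2 ⟨n, hxy⟩
  · intro y hy
    rcases mem_iUnion.1 hy with ⟨n, hn⟩
    exact mem_iUnion₂.2 ⟨g n, ⟨n, rfl⟩, hn⟩

lemma IsClosed.inter_isFSigma {X : Type*} [TopologicalSpace X] {A B : Set X}
    (hA : IsClosed A) (hB : IsFSigma B) : IsFSigma (A ∩ B) := by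
  obtain ⟨F, hF, rfl⟩ := hB
  exact ⟨fun n => A ∩ F n, fun n => hA.inter (hF n), by rw [inter_iUnion]⟩

/-- Every hereditarily Lindelöf regular space with a complete sequence of countable
closed covers has a complete sequence of countable disjoint `F_σ` covers. -/
theorem disjoint_FSigma_covers_of_hereditarilyLindelof {X : Type*} [TopologicalSpace X]
    [RegularSpace X] [HereditarilyLindelofSpace X]
    (𝓕 : ℕ → Set (Set X)) (h : CompleteCoverSeq 𝓕)
    (hcnt : ∀ n, (𝓕 n).Countable) (hcl : ∀ n, ∀ A ∈ 𝓕 n, IsClosed A) :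
    ∃ 𝓓 : ℕ → Set (Set X), CompleteCoverSeq 𝓓 ∧ (∀ n, (𝓓 n).Countable) ∧
      (∀ n, ∀ A ∈ 𝓓 n, IsFSigma A) ∧
      ∀ n, ∀ A ∈ 𝓓 n, ∀ B ∈ 𝓓 n, A ≠ B → Disjoint A B := by
  cases isEmpty_or_nonempty X with
  | inl hX =>
    refine ⟨fun _ => {∅}, ⟨fun n => ?_, fun F hF hFm => ?_⟩, fun n => countable_singleton _,
      fun n A hA => ?_, fun n A hA B hB hAB => ?_⟩
    · simp [Set.eq_empty_of_isEmpty (univ : Set X)]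
    · obtain ⟨A, hA, hAF⟩ := hFm 0
      rw [mem_singleton_iff] at hA
      subst hA
      exact absurd hAF (Filter.empty_notMem F)
    · rw [mem_singleton_iff] at hA
      subst hA
      exact ⟨fun _ => ∅, fun _ => isClosed_empty, by simp⟩
    · rw [mem_singleton_iff] at hA hB
      exact absurd (hA.trans hB.symm) hAB
  | inr hX =>
    -- each 𝓕 n is nonempty, so enumerate it
    have hne : ∀ n, (𝓕 n).Nonempty := by
      intro n
      obtain ⟨x⟩ := hX
      have hx : x ∈ ⋃₀ 𝓕 n := by rw [h.1 n]; trivial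
      obtain ⟨A, hA, -⟩ := hx
      exact ⟨A, hA⟩
    have hfex : ∀ n, ∃ f : ℕ → Set X, 𝓕 n = Set.range f := fun n =>
      Set.Countable.exists_eq_range (hcnt n) (hne n)
    choose f hf using hfex
    refine ⟨fun n => Set.range (disjointed (f n)), ⟨fun n => ?_, fun F hF hFm => ?_⟩,
      fun n => countable_range _, fun n A hA => ?_, fun n A hA B hB hAB => ?_⟩
    · rw [sUnion_range, iUnion_disjointed, ← sUnion_range, ← hf n, h.1 n]
    · refine h.2 F hF fun n => ?_
      obtain ⟨A, hA, hAF⟩ := hFm n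
      obtain ⟨k, rfl⟩ := hA
      refine ⟨f n k, by rw [hf n]; exact mem_range_self k,
        Filter.mem_of_superset hAF (disjointed_subset (f n) k)⟩
    · obtain ⟨k, rfl⟩ := hA
      rw [disjointed_eq_inter_compl]
      have hcl' : IsClosed (f n k) := hcl n _ (by rw [hf n]; exact mem_range_self k)
      refine hcl'.inter_isFSigma (IsOpen.isFSigma' ?_)
      refine Set.Finite.isOpen_biInter (Set.finite_Iio k) fun i _ => ?_
      exact (hcl n _ (by rw [hf n]; exact mem_range_self i)).isOpen_compl
    · obtain ⟨i, rfl⟩ := hA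
      obtain ⟨j, rfl⟩ := hB
      exact disjoint_disjointed (f n) (fun hij => hAB (by rw [hij]))
end

section
/- Let X be a Lindelöf space admitting a complete sequence of countable disjoint F_σ covers. Then for every compactification cX of X, X is an F_σδ subset of cX. -/
open Set Topology Filter

/-! ### Auxiliary definitions for the main theorem -/

/-- The closed "cell" associated to a finite list of index pairs: the element at position `p`
(from the head) of a list of length `n` corresponds to "level" `n - 1 - p`. -/
def DsetAux {K : Type*} (X' : Set K) (Fset : ℕ → ℕ → ℕ → Set K) : List (ℕ × ℕ) → Set K
  | [] => X'
  | a :: t => Fset t.length a.1 a.2 ∩ DsetAux X' Fset t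

/-- The pair of indices used at a given level in a list node. -/
def pairAtAux (l : List (ℕ × ℕ)) (lev : ℕ) : ℕ × ℕ :=
  (l.drop (l.length - (lev + 1))).headI

/-- The "conflict set": a finite union of closures of pieces belonging (at some level of the
node) to a different member of the disjoint cover at that level, with indices bounded by the
length of the node. -/
def ConAux {K : Type*} [TopologicalSpace K] (Fset : ℕ → ℕ → ℕ → Set K)
    (l : List (ℕ × ℕ)) : Set K :=
  ⋃ (lev : Fin l.length), ⋃ (i' : Fin (l.length + 1)), ⋃ (j' : Fin (l.length + 1)),
    if i'.1 ≠ (pairAtAux l lev.1).1 then closure (Fset lev.1 i'.1 j'.1) else ∅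

/-- A Lindelöf space with a complete sequence of countable disjoint `F_σ` covers is
`F_σδ` in every compactification. -/
theorem absolutely_FSigmaDelta_of_disjoint_FSigma_covers {X : Type u} [TopologicalSpace X]
    [LindelofSpace X]
    (𝓓 : ℕ → Set (Set X)) (h : CompleteCoverSeq 𝓓)
    (hcnt : ∀ n, (𝓓 n).Countable) (hfs : ∀ n, ∀ A ∈ 𝓓 n, IsFSigma A)
    (hdisj : ∀ n, ∀ A ∈ 𝓓 n, ∀ B ∈ 𝓓 n, A ≠ B → Disjoint A B) :
    ∀ (K : Type u) [TopologicalSpace K] [CompactSpace K] [T2Space K] (e : X → K),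
      IsEmbedding e → DenseRange e → IsFSigmaDelta (Set.range e) := by
  classical
  intro K _ _ _ e he hde
  -- trivial case : `X` empty
  by_cases hXne : Nonempty X
  swap
  · have hre : Set.range e = (∅ : Set K) := by
      simp [Set.range_eq_empty_iff.2 (not_nonempty_iff.1 hXne)]
    refine ⟨fun _ _ => ∅, fun _ _ => isClosed_empty, ?_⟩
    simp only [hre, Set.iUnion_empty]
    exact (Set.iInter_const (∅ : Set K)).symm
  -- each cover is nonempty
  have hDne : ∀ n, (𝓓 n).Nonempty := by
    intro n
    rcases Set.eq_empty_or_nonempty (𝓓 n) with hemp | hne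
    · exfalso
      have := h.1 n
      rw [hemp] at this
      simp only [Set.sUnion_empty] at this
      exact (Set.univ_nonempty (α := X)).ne_empty this.symm
    · exact hne
  -- enumerate the covers
  have hfex : ∀ n, ∃ f : ℕ → Set X, 𝓓 n = Set.range f := fun n =>
    (hcnt n).exists_eq_range (hDne n)
  choose f hf using hfex
  -- disjointified enumeration
  set g : ℕ → ℕ → Set X := fun n i =>
    if ∃ i' < i, f n i' = f n i then (∅ : Set X) else f n i with hgdef
  have hg_mem : ∀ n i, g n i = ∅ ∨ g n i ∈ 𝓓 n := by
    intro n i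
    by_cases hc : ∃ i' < i, f n i' = f n i
    · left; simp [hgdef, hc]
    · right
      have : g n i = f n i := by simp [hgdef, hc]
      rw [this, hf n]
      exact Set.mem_range_self i
  have hgU : ∀ n, (⋃ i, g n i) = Set.univ := by
    intro n
    apply Set.eq_univ_of_forall
    intro x
    have hx : x ∈ ⋃₀ 𝓓 n := by rw [h.1 n]; trivial
    obtain ⟨A, hA, hxA⟩ := hx
    rw [hf n] at hA
    obtain ⟨i, hi⟩ := hA
    have hex : ∃ i', f n i' = f n i := ⟨i, rfl⟩
    set i₀ := Nat.find hex with hi₀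
    have hspec : f n i₀ = f n i := Nat.find_spec hex
    have hmin : ∀ j < i₀, f n j ≠ f n i := fun j hj => Nat.find_min hex hj
    have : g n i₀ = f n i₀ := by
      have hnc : ¬∃ i' < i₀, f n i' = f n i₀ := by
        rintro ⟨i', hi', heq⟩
        exact hmin i' hi' (heq.trans hspec)
      simp [hgdef, hnc]
    refine Set.mem_iUnion.2 ⟨i₀, ?_⟩
    rw [this, hspec, hi]
    exact hxA
  have hgdisj : ∀ n i i', i ≠ i' → Disjoint (g n i) (g n i') := by
    have key : ∀ n i i', i < i' → Disjoint (g n i) (g n i') := by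
      intro n i i' hlt
      rcases Set.eq_empty_or_nonempty (g n i) with hemp | hne
      · simp [hemp]
      rcases Set.eq_empty_or_nonempty (g n i') with hemp' | hne'
      · simp [hemp']
      have hgi : g n i = f n i := by
        by_cases hc : ∃ i'' < i, f n i'' = f n i
        · exfalso; apply hne.ne_empty; simp [hgdef, hc]
        · simp [hgdef, hc]
      have hgi' : g n i' = f n i' := by
        by_cases hc : ∃ i'' < i', f n i'' = f n i'
        · exfalso; apply hne'.ne_empty; simp [hgdef, hc]
        · simp [hgdef, hc]
      have hmemi : g n i ∈ 𝓓 n := by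
        rw [hgi, hf n]; exact Set.mem_range_self i
      have hmemi' : g n i' ∈ 𝓓 n := by
        rw [hgi', hf n]; exact Set.mem_range_self i'
      have hneq : g n i ≠ g n i' := by
        intro heq
        have hc : ∃ i'' < i', f n i'' = f n i' := ⟨i, hlt, by rw [← hgi, heq, hgi']⟩
        apply hne'.ne_empty
        simp [hgdef, hc]
      exact hdisj n _ hmemi _ hmemi' hneq
    intro n i i' hne
    rcases lt_or_gt_of_ne hne with hlt | hgt
    · exact key n i i' hlt
    · exact (key n i' i hgt).symm
  -- F_σ decompositions of the members
  have hgfs : ∀ n i, ∃ P : ℕ → Set X, (∀ m, IsClosed (P m)) ∧ g n i = ⋃ m, P m := by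
    intro n i
    rcases hg_mem n i with hemp | hmem
    · exact ⟨fun _ => ∅, fun _ => isClosed_empty, by simp [hemp]⟩
    · exact hfs n _ hmem
  choose P hPcl hPU using hgfs
  -- move everything to `K`
  set X' : Set K := Set.range e with hX'def
  set Fset : ℕ → ℕ → ℕ → Set K := fun n i j => e '' (P n i j) with hFdef
  set Aset : ℕ → ℕ → Set K := fun n i => e '' (g n i) with hAdef
  have hFsubX' : ∀ n i j, Fset n i j ⊆ X' := fun n i j => Set.image_subset_range e _
  have hFclX : ∀ n i j, X' ∩ closure (Fset n i j) = Fset n i j := by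
    intro n i j
    apply Set.Subset.antisymm
    · rintro x ⟨⟨w, rfl⟩, hcl⟩
      have hw : w ∈ closure (P n i j) := by
        rw [he.closure_eq_preimage_closure_image (P n i j)]
        exact hcl
      rw [(hPcl n i j).closure_eq] at hw
      exact Set.mem_image_of_mem e hw
    · exact Set.subset_inter (hFsubX' n i j) subset_closure
  have hFA : ∀ n i j, Fset n i j ⊆ Aset n i := by
    intro n i j
    apply Set.image_mono
    rw [hPU n i]
    exact Set.subset_iUnion _ j
  have hAU : ∀ n, (⋃ i, Aset n i) = X' := by
    intro n
    rw [hAdef]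
    simp only
    rw [← Set.image_iUnion, hgU n, Set.image_univ]
  have hFU : ∀ n i, (⋃ j, Fset n i j) = Aset n i := by
    intro n i
    rw [hAdef, hFdef]
    simp only
    rw [← Set.image_iUnion, ← hPU n i]
  have hAdisj : ∀ n i i', i ≠ i' → Disjoint (Aset n i) (Aset n i') := by
    intro n i i' hne
    exact (Set.disjoint_image_iff he.injective).2 (hgdisj n i i' hne)
  -- Lindelöf
  have hLin : IsLindelof X' := by
    have : IsLindelof (Set.univ : Set X) := isLindelof_univ
    have him := this.image he.continuous
    rwa [Set.image_univ] at him
  -- basic properties of Dset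
  have hDsetX' : ∀ l : List (ℕ × ℕ), DsetAux X' Fset l ⊆ X' := by
    intro l
    induction l with
    | nil => exact Set.Subset.rfl
    | cons a t ih => exact (Set.inter_subset_right).trans ih
  have hDrep : ∀ l : List (ℕ × ℕ), ∃ C : Set K, IsClosed C ∧ DsetAux X' Fset l = X' ∩ C := by
    intro l
    induction l with
    | nil => exact ⟨Set.univ, isClosed_univ, by simp [DsetAux]⟩
    | cons a t ih =>
      obtain ⟨C, hCcl, hCeq⟩ := ih
      refine ⟨closure (Fset t.length a.1 a.2) ∩ C, isClosed_closure.inter hCcl, ?_⟩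
      show Fset t.length a.1 a.2 ∩ DsetAux X' Fset t = _
      ext x
      constructor
      · rintro ⟨hxF, hxD⟩
        have h2 : x ∈ X' ∩ closure (Fset t.length a.1 a.2) := by
          rw [hFclX t.length a.1 a.2]; exact hxF
        have h3 : x ∈ X' ∩ C := by rw [← hCeq]; exact hxD
        exact ⟨h2.1, h2.2, h3.2⟩
      · rintro ⟨hx1, hxcl, hxC⟩
        have h2 : x ∈ Fset t.length a.1 a.2 := by
          rw [← hFclX t.length a.1 a.2]; exact ⟨hx1, hxcl⟩
        have h3 : x ∈ DsetAux X' Fset t := by rw [hCeq]; exact ⟨hx1, hxC⟩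
        exact ⟨h2, h3⟩
  have hDLin : ∀ l : List (ℕ × ℕ), IsLindelof (DsetAux X' Fset l) := by
    intro l
    obtain ⟨C, hCcl, hCeq⟩ := hDrep l
    rw [hCeq]
    exact hLin.inter_right hCcl
  -- Dset of an append is contained in Dset of the suffix
  have hDapp : ∀ l₁ l₂ : List (ℕ × ℕ), DsetAux X' Fset (l₁ ++ l₂) ⊆ DsetAux X' Fset l₂ := by
    intro l₁ l₂
    induction l₁ with
    | nil => exact Set.Subset.rfl
    | cons a t ih =>
      show Fset _ _ _ ∩ DsetAux X' Fset (t ++ l₂) ⊆ _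
      exact (Set.inter_subset_right).trans ih
  -- Dset is contained in the F-piece at each level
  have hDsub : ∀ (l : List (ℕ × ℕ)) (lev : ℕ), lev < l.length →
      DsetAux X' Fset l ⊆ Fset lev (pairAtAux l lev).1 (pairAtAux l lev).2 := by
    intro l lev hlev
    set m := l.length - (lev + 1) with hm
    have hsplit : l.take m ++ l.drop m = l := List.take_append_drop m l
    have hsub1 : DsetAux X' Fset l ⊆ DsetAux X' Fset (l.drop m) := by
      conv_lhs => rw [← hsplit]
      exact hDapp _ _
    have hlen : (l.drop m).length = lev + 1 := by
      rw [List.length_drop]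
      omega
    cases hd : l.drop m with
    | nil => rw [hd] at hlen; simp at hlen
    | cons a t =>
      have hpa : pairAtAux l lev = a := by
        unfold pairAtAux
        rw [← hm, hd]
        rfl
      have ht : t.length = lev := by
        rw [hd] at hlen
        simpa using hlen
      rw [hpa]
      intro x hx
      have hx' : x ∈ DsetAux X' Fset (a :: t) := by
        rw [← hd]; exact hsub1 hx
      have : x ∈ Fset t.length a.1 a.2 := hx'.1
      rwa [ht] at this
  -- Dset avoids the conflict set
  have hDCon : ∀ l : List (ℕ × ℕ), DsetAux X' Fset l ⊆ (ConAux Fset l)ᶜ := by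
    intro l x hx hxc
    obtain ⟨lev, hlev⟩ := Set.mem_iUnion.1 hxc
    obtain ⟨i', hi'⟩ := Set.mem_iUnion.1 hlev
    obtain ⟨j', hj'⟩ := Set.mem_iUnion.1 hi'
    by_cases hcond : i'.1 ≠ (pairAtAux l lev.1).1
    · rw [if_pos hcond] at hj'
      have hx1 : x ∈ Fset lev.1 i'.1 j'.1 := by
        rw [← hFclX lev.1 i'.1 j'.1]
        exact ⟨hDsetX' l hx, hj'⟩
      have hx2 : x ∈ Fset lev.1 (pairAtAux l lev.1).1 (pairAtAux l lev.1).2 :=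
        hDsub l lev.1 lev.2 hx
      have hA1 : x ∈ Aset lev.1 i'.1 := hFA _ _ _ hx1
      have hA2 : x ∈ Aset lev.1 (pairAtAux l lev.1).1 := hFA _ _ _ hx2
      exact Set.disjoint_left.1 (hAdisj lev.1 _ _ hcond) hA1 hA2
    · rw [if_neg hcond] at hj'
      exact hj'
  -- the conflict set is closed
  have hConCl : ∀ l : List (ℕ × ℕ), IsClosed (ConAux Fset l) := by
    intro l
    apply isClosed_iUnion_of_finite
    intro lev
    apply isClosed_iUnion_of_finite
    intro i'
    apply isClosed_iUnion_of_finite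
    intro j'
    split_ifs
    · exact isClosed_closure
    · exact isClosed_empty
  -- Lindelöf covering lemma
  have hLC : ∀ L O : Set K, IsLindelof L → IsOpen O → L ⊆ O →
      ∃ c : ℕ → Set K, (∀ m, IsClosed (c m)) ∧ (∀ m, c m ⊆ O) ∧ L ⊆ ⋃ m, c m := by
    intro L O hL hO hLO
    have hx : ∀ x ∈ L, ∃ t, t ∈ 𝓝 x ∧ IsClosed t ∧ t ⊆ O := fun x hx =>
      exists_mem_nhds_isClosed_subset (hO.mem_nhds (hLO hx))
    choose! t ht using hx
    obtain ⟨s, hsc, hsub, hcov⟩ := hL.elim_nhds_subcover t (fun x hx => (ht x hx).1)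
    rcases s.eq_empty_or_nonempty with rfl | hne
    · refine ⟨fun _ => ∅, fun _ => isClosed_empty, fun _ => Set.empty_subset O, ?_⟩
      intro x hx
      have := hcov hx
      simp at this
    · obtain ⟨fc, hfc⟩ := hsc.exists_eq_range hne
      refine ⟨fun m => t (fc m), ?_, ?_, ?_⟩
      · intro m
        have hm : fc m ∈ s := by rw [hfc]; exact Set.mem_range_self m
        exact (ht (fc m) (hsub _ hm)).2.1
      · intro m
        have hm : fc m ∈ s := by rw [hfc]; exact Set.mem_range_self m
        exact (ht (fc m) (hsub _ hm)).2.2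
      · intro x hx
        have := hcov hx
        rw [hfc, Set.biUnion_range] at this
        exact this
  -- choose the closed covering families
  have hfamEx : ∀ l : List (ℕ × ℕ), ∃ c : ℕ → Set K, (∀ m, IsClosed (c m)) ∧
      (∀ m, c m ⊆ (ConAux Fset l)ᶜ) ∧ DsetAux X' Fset l ⊆ ⋃ m, c m := by
    intro l
    exact hLC _ _ (hDLin l) (hConCl l).isOpen_compl (hDCon l)
  choose fam hfamCl hfamCon hfamCov using hfamEx
  -- the F_σδ scheme
  set Qc : List (ℕ × ℕ) → ℕ → Set K := fun l m =>
    closure (DsetAux X' Fset l) ∩ fam l m with hQcdef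
  set Q : List (ℕ × ℕ) → Set K := fun l => ⋃ m, Qc l m with hQdef
  have hQccl : ∀ l m, IsClosed (Qc l m) := fun l m =>
    isClosed_closure.inter (hfamCl l m)
  have hQmem : ∀ l, ∀ x ∈ DsetAux X' Fset l, x ∈ Q l := by
    intro l x hx
    obtain ⟨m, hm⟩ := Set.mem_iUnion.1 (hfamCov l hx)
    exact Set.mem_iUnion.2 ⟨m, subset_closure hx, hm⟩
  have hQcl : ∀ l, Q l ⊆ closure (DsetAux X' Fset l) := by
    intro l x hx
    obtain ⟨m, hm⟩ := Set.mem_iUnion.1 hx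
    exact hm.1
  have hQCon : ∀ l, Q l ⊆ (ConAux Fset l)ᶜ := by
    intro l x hx
    obtain ⟨m, hm⟩ := Set.mem_iUnion.1 hx
    exact hfamCon l m hm.2
  set SS : ℕ → Set K := fun n => ⋃ (l : {l : List (ℕ × ℕ) // l.length = n}), Q l.1
    with hSSdef
  -- X' is contained in the scheme
  have hcover : ∀ x ∈ X', ∀ n, ∃ l : List (ℕ × ℕ), l.length = n ∧ x ∈ DsetAux X' Fset l := by
    intro x hx n
    have hstep : ∀ lev : ℕ, ∃ i j, x ∈ Fset lev i j := by
      intro lev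
      have : x ∈ ⋃ i, Aset lev i := by rw [hAU lev]; exact hx
      obtain ⟨i, hi⟩ := Set.mem_iUnion.1 this
      have : x ∈ ⋃ j, Fset lev i j := by rw [hFU lev i]; exact hi
      obtain ⟨j, hj⟩ := Set.mem_iUnion.1 this
      exact ⟨i, j, hj⟩
    choose iA jA hiA using hstep
    induction n with
    | zero => exact ⟨[], rfl, hx⟩
    | succ n ih =>
      obtain ⟨l, hl, hxl⟩ := ih
      refine ⟨(iA n, jA n) :: l, by simp [hl], ?_⟩
      show x ∈ Fset l.length _ _ ∩ DsetAux X' Fset l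
      rw [hl]
      exact ⟨hiA n, hxl⟩
  have hXS : X' ⊆ ⋂ n, SS n := by
    intro x hx
    apply Set.mem_iInter.2
    intro n
    obtain ⟨l, hl, hxl⟩ := hcover x hx n
    exact Set.mem_iUnion.2 ⟨⟨l, hl⟩, hQmem l x hxl⟩
  -- the main inclusion
  have hSX : (⋂ n, SS n) ⊆ X' := by
    intro y hy
    have hw : ∀ n, ∃ l : List (ℕ × ℕ), l.length = n ∧ y ∈ Q l := by
      intro n
      have := Set.mem_iInter.1 hy n
      obtain ⟨l, hl⟩ := Set.mem_iUnion.1 this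
      exact ⟨l.1, l.2, hl⟩
    choose u hulen huQ using hw
    set τ : ℕ → ℕ := fun k => (pairAtAux (u (k + 1)) k).1 with hτdef
    set σ : ℕ → ℕ := fun k => (pairAtAux (u (k + 1)) k).2 with hσdef
    -- y is in the closure of the chosen piece at each level
    have hyΦ : ∀ k, y ∈ closure (Fset k (τ k) (σ k)) := by
      intro k
      have h1 : y ∈ closure (DsetAux X' Fset (u (k + 1))) := hQcl _ (huQ (k + 1))
      have h2 : DsetAux X' Fset (u (k + 1)) ⊆ Fset k (τ k) (σ k) :=
        hDsub (u (k + 1)) k (by rw [hulen]; omega)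
      exact closure_mono h2 h1
    -- stabilization
    have hstab : ∀ k n, k < n → τ k ≤ n → σ k ≤ n → (pairAtAux (u n) k).1 = τ k := by
      intro k n hkn hτn hσn
      by_contra hne
      have hyCon : y ∈ ConAux Fset (u n) := by
        have hΦsub : closure (Fset k (τ k) (σ k)) ⊆ ConAux Fset (u n) := by
          intro z hz
          have hcond : (τ k) ≠ (pairAtAux (u n) k).1 := fun hcontra => hne hcontra.symm
          apply Set.mem_iUnion.2
          refine ⟨⟨k, by rw [hulen]; exact hkn⟩, ?_⟩
          apply Set.mem_iUnion.2
          refine ⟨⟨τ k, by rw [hulen]; omega⟩, ?_⟩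
          apply Set.mem_iUnion.2
          refine ⟨⟨σ k, by rw [hulen]; omega⟩, ?_⟩
          show z ∈ if (τ k) ≠ (pairAtAux (u n) k).1 then closure (Fset k (τ k) (σ k)) else ∅
          rw [if_pos hcond]
          exact hz
        exact hΦsub (hyΦ k)
      exact hQCon (u n) (huQ n) hyCon
    -- the decreasing sets B
    set Bset : ℕ → Set K := fun k => X' ∩ ⋂ (l : Fin k), Aset l.1 (τ l.1) with hBdef
    have hBsub : ∀ k, Bset k ⊆ X' := fun k => Set.inter_subset_left
    have hBanti : ∀ k k', k ≤ k' → Bset k' ⊆ Bset k := by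
      intro k k' hkk'
      apply Set.inter_subset_inter_right
      intro x hx
      apply Set.mem_iInter.2
      intro l
      exact Set.mem_iInter.1 hx ⟨l.1, lt_of_lt_of_le l.2 hkk'⟩
    have hyB : ∀ k, y ∈ closure (Bset k) := by
      intro k
      set c : ℕ → ℕ := fun l => max (τ l) (σ l) with hcdef
      set n := k + (Finset.range k).sup c with hndef
      have hkn : k ≤ n := by omega
      have hDB : DsetAux X' Fset (u n) ⊆ Bset k := by
        intro x hx
        refine ⟨hDsetX' _ hx, Set.mem_iInter.2 fun l => ?_⟩
        have hln : (l : ℕ) < n := lt_of_lt_of_le l.2 hkn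
        have hcl : c l.1 ≤ n := by
          have : c l.1 ≤ (Finset.range k).sup c :=
            Finset.le_sup (Finset.mem_range.2 l.2)
          omega
        have hτl : τ l.1 ≤ n := le_trans (le_max_left _ _) hcl
        have hσl : σ l.1 ≤ n := le_trans (le_max_right _ _) hcl
        have hpair : (pairAtAux (u n) l.1).1 = τ l.1 := hstab l.1 n hln hτl hσl
        have hxF : x ∈ Fset l.1 (pairAtAux (u n) l.1).1 (pairAtAux (u n) l.1).2 := by
          have := hDsub (u n) l.1 (by rw [hulen]; exact hln)
          exact this hx
        have := hFA l.1 _ _ hxF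
        rwa [hpair] at this
      exact closure_mono hDB (hQcl _ (huQ n))
    -- the filter
    set 𝓗 : Filter K := 𝓝 y ⊓ ⨅ k, 𝓟 (Bset k) with h𝓗def
    have hdir : Directed (· ≥ ·) fun k => 𝓟 (Bset k) := by
      intro k k'
      exact ⟨max k k', Filter.principal_mono.2 (hBanti k _ (le_max_left _ _)),
        Filter.principal_mono.2 (hBanti k' _ (le_max_right _ _))⟩
    have hmemH : ∀ s ∈ 𝓗, ∃ t ∈ 𝓝 y, ∃ k, t ∩ Bset k ⊆ s := by
      intro s hs
      rw [h𝓗def, Filter.mem_inf_iff] at hs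
      obtain ⟨t₁, ht₁, t₂, ht₂, rfl⟩ := hs
      rw [Filter.mem_iInf_of_directed hdir] at ht₂
      obtain ⟨k, hk⟩ := ht₂
      exact ⟨t₁, ht₁, k, Set.inter_subset_inter_right t₁ (Filter.mem_principal.1 hk)⟩
    have hBneH : ∀ k, Bset k ∈ 𝓗 := by
      intro k
      apply Filter.mem_inf_of_right
      exact Filter.mem_iInf_of_mem k (Filter.mem_principal_self _)
    have hne𝓕 : (Filter.comap e 𝓗).NeBot := by
      rw [Filter.comap_neBot_iff]
      intro t ht
      obtain ⟨t₁, ht₁, k, hsub⟩ := hmemH t ht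
      have hyc := hyB k
      rw [mem_closure_iff_nhds] at hyc
      obtain ⟨z, hz1, hz2⟩ := hyc t₁ ht₁
      obtain ⟨w, rfl⟩ := hBsub k hz2
      exact ⟨w, hsub ⟨hz1, hz2⟩⟩
    have hmem𝓓 : ∀ n, ∃ A ∈ 𝓓 n, A ∈ Filter.comap e 𝓗 := by
      intro n
      have hBA : Bset (n + 1) ⊆ Aset n (τ n) := by
        intro x hx
        exact Set.mem_iInter.1 hx.2 ⟨n, Nat.lt_succ_self n⟩
      have hBne : (Bset (n + 1)).Nonempty := by
        by_contra hc
        rw [Set.not_nonempty_iff_eq_empty] at hc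
        have := hyB (n + 1)
        rw [hc, closure_empty] at this
        exact this
      have hgne : (g n (τ n)).Nonempty := by
        obtain ⟨z, hz⟩ := hBne
        obtain ⟨w, hw, _⟩ := hBA hz
        exact ⟨w, hw⟩
      have hgmem : g n (τ n) ∈ 𝓓 n := by
        rcases hg_mem n (τ n) with hemp | hmem
        · exact absurd hemp hgne.ne_empty
        · exact hmem
      refine ⟨g n (τ n), hgmem, ?_⟩
      rw [Filter.mem_comap]
      refine ⟨Aset n (τ n), Filter.mem_of_superset (hBneH (n + 1)) hBA, ?_⟩
      rw [hAdef]
      simp only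
      rw [Set.preimage_image_eq _ he.injective]
    obtain ⟨x, hx⟩ := h.2 (Filter.comap e 𝓗) hne𝓕 hmem𝓓
    -- conclude y = e x
    have hmap : Filter.map e (𝓝 x ⊓ Filter.comap e 𝓗) ≤ 𝓝 (e x) ⊓ 𝓝 y := by
      apply le_inf
      · exact le_trans (Filter.map_mono inf_le_left) (he.continuous.tendsto x)
      · exact le_trans (le_trans (Filter.map_mono inf_le_right) Filter.map_comap_le)
          (le_trans inf_le_left le_rfl)
    have hnb : (𝓝 (e x) ⊓ 𝓝 y).NeBot := by
      have : (Filter.map e (𝓝 x ⊓ Filter.comap e 𝓗)).NeBot := Filter.NeBot.map hx e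
      exact Filter.neBot_of_le hmap
    have : e x = y := eq_of_nhds_neBot hnb
    exact ⟨x, this⟩
  -- assemble
  have hEq : Set.range e = ⋂ n, SS n := Set.Subset.antisymm hXS hSX
  have hSSfs : ∀ n, ∃ G : ℕ → Set K, (∀ m, IsClosed (G m)) ∧ SS n = ⋃ m, G m := by
    intro n
    have hcount : Countable ({l : List (ℕ × ℕ) // l.length = n} × ℕ) := by infer_instance
    have hnonempty : Nonempty ({l : List (ℕ × ℕ) // l.length = n} × ℕ) :=
      ⟨⟨⟨List.replicate n (0, 0), List.length_replicate⟩, 0⟩⟩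
    obtain ⟨fsur, hfsur⟩ := exists_surjective_nat ({l : List (ℕ × ℕ) // l.length = n} × ℕ)
    refine ⟨fun m => Qc (fsur m).1.1 (fsur m).2, fun m => hQccl _ _, ?_⟩
    ext z
    constructor
    · intro hz
      obtain ⟨l, hl⟩ := Set.mem_iUnion.1 hz
      obtain ⟨m, hm⟩ := Set.mem_iUnion.1 hl
      obtain ⟨p, hp⟩ := hfsur (l, m)
      exact Set.mem_iUnion.2 ⟨p, by rw [hp]; exact hm⟩
    · intro hz
      obtain ⟨p, hp⟩ := Set.mem_iUnion.1 hz
      exact Set.mem_iUnion.2 ⟨(fsur p).1, Set.mem_iUnion.2 ⟨(fsur p).2, hp⟩⟩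
  choose G hGcl hGU using hSSfs
  refine ⟨G, fun n m => hGcl n m, ?_⟩
  show X' = _
  rw [hX'def, hEq]
  exact Set.iInter_congr hGU
end

section
/- Let X be a dense Lindelöf subspace of a compact Hausdorff space cX, and let D, E ⊆ X be disjoint sets that are both closed in X. Then there exists an F_σ subset H of cX with X ⊆ H ⊆ cX \ (cl(D) ∩ cl(E)), where closures are taken in cX. -/
open Set Topology Filter

/-- For a dense Lindelöf subspace `X` of a compact Hausdorff space and disjoint sets
`D, E ⊆ X` closed in `X`, there is an `F_σ` set separating `X` from `cl D ∩ cl E`. -/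
theorem FSigma_separation_from_closures {cX : Type*} [TopologicalSpace cX]
    [CompactSpace cX] [T2Space cX] (X : Set cX) (hXdense : Dense X)
    (hXlind : IsLindelof X) (D E : Set cX) (hD : D ⊆ X) (hE : E ⊆ X)
    (hdisj : Disjoint D E)
    (hDc : IsClosed ((↑) ⁻¹' D : Set ↥X)) (hEc : IsClosed ((↑) ⁻¹' E : Set ↥X)) :
    ∃ H : Set cX, IsFSigma H ∧ X ⊆ H ∧ H ⊆ (closure D ∩ closure E)ᶜ := by
  -- Step 1: closure D ∩ X ⊆ D, closure E ∩ X ⊆ E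
  have hclD : closure D ∩ X ⊆ D := by
    rcases isClosed_induced_iff.mp hDc with ⟨C, hC, hCeq⟩
    have hDsub : D ⊆ C := by
      intro x hx
      exact hCeq.ge (show (⟨x, hD hx⟩ : ↥X) ∈ ((↑) ⁻¹' D : Set ↥X) from hx)
    intro x ⟨hx1, hx2⟩
    have hxC : x ∈ C := (hC.closure_subset_iff.mpr hDsub) hx1
    exact hCeq.le (show (⟨x, hx2⟩ : ↥X) ∈ ((↑) ⁻¹' C : Set ↥X) from hxC)
  have hclE : closure E ∩ X ⊆ E := by
    rcases isClosed_induced_iff.mp hEc with ⟨C, hC, hCeq⟩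
    have hEsub : E ⊆ C := by
      intro x hx
      exact hCeq.ge (show (⟨x, hE hx⟩ : ↥X) ∈ ((↑) ⁻¹' E : Set ↥X) from hx)
    intro x ⟨hx1, hx2⟩
    have hxC : x ∈ C := (hC.closure_subset_iff.mpr hEsub) hx1
    exact hCeq.le (show (⟨x, hx2⟩ : ↥X) ∈ ((↑) ⁻¹' C : Set ↥X) from hxC)
  set K := closure D ∩ closure E with hK
  have hKX : Disjoint K X := by
    rw [disjoint_left]
    rintro x ⟨hxD, hxE⟩ hxX
    exact hdisj.le_bot ⟨hclD ⟨hxD, hxX⟩, hclE ⟨hxE, hxX⟩⟩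
  have hKc : IsClosed K := (isClosed_closure).inter isClosed_closure
  -- Step 2: for each x ∈ X, a closed neighborhood inside Kᶜ
  have hKcomp : IsOpen Kᶜ := hKc.isOpen_compl
  have hnbhd : ∀ x ∈ X, ∃ N : Set cX, N ∈ 𝓝 x ∧ IsClosed N ∧ N ⊆ Kᶜ := by
    intro x hx
    have hxK : x ∈ Kᶜ := fun h => hKX.le_bot ⟨h, hx⟩
    exact exists_mem_nhds_isClosed_subset (hKcomp.mem_nhds hxK)
  choose! N hN1 hN2 hN3 using hnbhd
  obtain ⟨t, htc, hts, hcov⟩ := hXlind.elim_nhds_subcover N (fun x hx => hN1 x hx)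
  -- Step 3: enumerate t
  rcases t.eq_empty_or_nonempty with rfl | hne
  · refine ⟨∅, ⟨fun _ => ∅, fun _ => isClosed_empty, by simp⟩, ?_, by simp⟩
    simpa using hcov
  · obtain ⟨f, hf⟩ := (Set.countable_iff_exists_surjective hne).mp htc
    refine ⟨⋃ n, N (f n), ⟨fun n => N (f n), fun n => hN2 _ (hts _ (f n).2), rfl⟩, ?_, ?_⟩
    · intro x hx
      obtain ⟨y, hy, hxy⟩ := by simpa using hcov hx
      obtain ⟨n, hn⟩ := hf ⟨y, hy⟩
      exact mem_iUnion.mpr ⟨n, by rw [hn]; exact hxy⟩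
    · exact iUnion_subset fun n => hN3 _ (hts _ (f n).2)
end

section
/- If a Hausdorff topological space admits a complete sequence of covers each of which is countable, then the space is Lindelöf. -/
open Set Topology Filter

private lemma step_lemma {X : Type*} [TopologicalSpace X] (𝓕 : ℕ → Set (Set X))
    (hcov : ∀ n, ⋃₀ 𝓕 n = Set.univ) (hcnt : ∀ n, (𝓕 n).Countable)
    (f : Filter X) [CountableInterFilter f] (n : ℕ) (B : Set X)
    (hB : (f ⊓ 𝓟 B).NeBot) :
    ∃ A, A ∈ 𝓕 n ∧ (f ⊓ 𝓟 (B ∩ A)).NeBot := by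
  by_contra hc
  push_neg at hc
  have hmem : ∀ A ∈ 𝓕 n, (B ∩ A)ᶜ ∈ f := by
    intro A hA
    have := hc A hA
    exact inf_principal_eq_bot.mp this
  have hbig : (⋂ A ∈ 𝓕 n, (B ∩ A)ᶜ) ∈ f :=
    (countable_bInter_mem (hcnt n)).mpr hmem
  have hBc : Bᶜ ∈ f := by
    refine mem_of_superset hbig ?_
    intro x hx
    simp only [mem_iInter, mem_compl_iff, mem_inter_iff, not_and] at hx
    intro hxB
    have : x ∈ ⋃₀ 𝓕 n := by rw [hcov n]; trivial
    obtain ⟨A, hA, hxA⟩ := this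
    exact hx A hA hxB hxA
  exact hB.ne (inf_principal_eq_bot.mpr hBc)

/-- A Hausdorff space with a complete sequence of countable covers is Lindelöf. -/
theorem lindelof_of_completeCoverSeq {X : Type*} [TopologicalSpace X] [T2Space X]
    (𝓕 : ℕ → Set (Set X)) (h : CompleteCoverSeq 𝓕) (hcnt : ∀ n, (𝓕 n).Countable) :
    LindelofSpace X := by
  obtain ⟨hcov, hcomp⟩ := h
  constructor
  intro f hne hcif hle
  -- build the recursive sequence
  have step : ∀ (n : ℕ) (B : Set X), ∃ A,
      (f ⊓ 𝓟 B).NeBot → A ∈ 𝓕 n ∧ (f ⊓ 𝓟 (B ∩ A)).NeBot := by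
    intro n B
    by_cases hB : (f ⊓ 𝓟 B).NeBot
    · obtain ⟨A, hA1, hA2⟩ := step_lemma 𝓕 hcov hcnt f n B hB
      exact ⟨A, fun _ => ⟨hA1, hA2⟩⟩
    · exact ⟨∅, fun hB' => absurd hB' hB⟩
  choose pick hpick using step
  set B : ℕ → Set X := fun n => Nat.rec Set.univ (fun k Bk => Bk ∩ pick k Bk) n with hBdef
  have hB0 : B 0 = Set.univ := rfl
  have hBsucc : ∀ n, B (n + 1) = B n ∩ pick n (B n) := fun n => rfl
  have hne' : ∀ n, (f ⊓ 𝓟 (B n)).NeBot := by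
    intro n
    induction n with
    | zero => rw [hB0]; simpa using hne
    | succ k ih =>
      rw [hBsucc]
      exact (hpick k (B k) ih).2
  have hAmem : ∀ n, pick n (B n) ∈ 𝓕 n := fun n => (hpick n (B n) (hne' n)).1
  -- the big filter
  set g : Filter X := ⨅ n, (f ⊓ 𝓟 (B n)) with hg
  have hBanti : Antitone B := antitone_nat_of_succ_le fun n => by
    rw [hBsucc]; exact inter_subset_left
  have hdir : Directed (· ≥ ·) fun n => f ⊓ 𝓟 (B n) := fun m n =>
    ⟨max m n, inf_le_inf_left _ (principal_mono.mpr (hBanti (le_max_left m n))),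
      inf_le_inf_left _ (principal_mono.mpr (hBanti (le_max_right m n)))⟩
  have hgne : g.NeBot := iInf_neBot_of_directed' hdir hne'
  have hgle : g ≤ f := le_trans (iInf_le _ 0) inf_le_left
  have hgmem : ∀ n, ∃ A ∈ 𝓕 n, A ∈ g := by
    intro n
    refine ⟨pick n (B n), hAmem n, ?_⟩
    have h1 : g ≤ f ⊓ 𝓟 (B (n + 1)) := iInf_le _ (n + 1)
    have h2 : B (n + 1) ⊆ pick n (B n) := by rw [hBsucc]; exact inter_subset_right
    exact le_principal_iff.mp (le_trans h1 (le_trans inf_le_right (principal_mono.mpr h2)))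
  obtain ⟨x, hx⟩ := hcomp g hgne hgmem
  exact ⟨x, mem_univ x, hx.mono hgle⟩
end

section
/- A topological space X is compact if and only if X is closed in every Hausdorff topological space in which it is embedded (i.e., X is absolutely closed among Hausdorff spaces). -/
open Set Topology Filter

lemma isInducing_stoneCechUnit_aux {X : Type u} [TopologicalSpace X]
    [CompletelyRegularSpace X] :
    Topology.IsInducing (stoneCechUnit : X → StoneCech X) := by
  rw [Topology.isInducing_iff_nhds]
  intro x
  refine le_antisymm ((continuous_stoneCechUnit.tendsto x).le_comap) ?_
  intro U hU
  rcases mem_nhds_iff.mp hU with ⟨V, hVU, hV, hxV⟩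
  obtain ⟨f, fc, fx, fK⟩ :=
    CompletelyRegularSpace.completely_regular x Vᶜ hV.isClosed_compl (by simpa)
  set g := stoneCechExtend fc with hg
  have hgu : g ∘ stoneCechUnit = f := stoneCechExtend_extends fc
  have hgo : IsOpen (g ⁻¹' {(1 : unitInterval)}ᶜ) :=
    (isClosed_singleton.preimage (continuous_stoneCechExtend fc)).isOpen_compl
  refine Filter.mem_of_superset (Filter.preimage_mem_comap
    (hgo.mem_nhds ?_)) ?_
  · have hgx : g (stoneCechUnit x) = f x := congrFun hgu x
    simp only [mem_preimage, mem_compl_iff, mem_singleton_iff, hgx, fx]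
    exact fun h => zero_ne_one (congrArg Subtype.val h)
  · intro y hy
    simp only [mem_preimage, mem_compl_iff, mem_singleton_iff] at hy
    have : g (stoneCechUnit y) = f y := congrFun hgu y
    rw [this] at hy
    by_contra hyU
    exact hy (fK (fun hyV => hyU (hVU hyV)))

/-- A Tychonoff space is compact iff it is closed in every Hausdorff space in which it
is embedded. -/
theorem compact_iff_absolutely_closed (X : Type u) [TopologicalSpace X] [T35Space X] :
    CompactSpace X ↔
      ∀ (Y : Type u) [TopologicalSpace Y] [T2Space Y] (e : X → Y),
        IsEmbedding e → IsClosed (Set.range e) := by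
  constructor
  · intro hX Y _ _ e he
    exact (isCompact_range he.continuous).isClosed
  · intro h
    have hemb : Topology.IsEmbedding (stoneCechUnit : X → StoneCech X) :=
      ⟨isInducing_stoneCechUnit_aux, injective_stoneCechUnit_of_t35Space⟩
    have hcl := h (StoneCech X) stoneCechUnit hemb
    have hce : Topology.IsClosedEmbedding (stoneCechUnit : X → StoneCech X) :=
      ⟨hemb, hcl⟩
    exact hce.compactSpace
end
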